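/- arXiv:0805.1252 — 3 statements merged into one kernel-verified Lean document; each statement's English description precedes it below -/
import Mathlib

section
/- Let n ≥ 1 and let Φ_A = {±e_i : 1 ≤ i ≤ n} ∪ {±(e_j − e_k) : 1 ≤ j ≠ k ≤ n} be the set of roots of type A_n in ℝ^n, with dual lattice M = ℤ^n. Let F = {u ∈ ℝ^n : −1 ≤ ⟨u, v⟩ ≤ 1 for all v ∈ Φ_A}. Then for every integer q ≥ 2 and every w ∈ (1/q)M, there exists u ∈ (1/q)M with u − w ∈ M and u lying in the topological interior of F. (Consequently, every lattice polytope cut out by A_n is diagonally split for every q ≥ 2.) -/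
open Finset

/-- The `i`-th standard basis vector of `ℝ^n`. -/
noncomputable def stdBasis (n : ℕ) (i : Fin n) : Fin n → ℝ := fun j => if j = i then 1 else 0

/-- The standard inner product on `ℝ^n`. -/
noncomputable def innerProd {n : ℕ} (u v : Fin n → ℝ) : ℝ := ∑ i, u i * v i

/-- The roots of type `A_n`: `±e_i` and `±(e_j - e_k)` for `j ≠ k`. -/
def typeA (n : ℕ) : Set (Fin n → ℝ) :=
  {v | ∃ i, v = stdBasis n i ∨ v = -stdBasis n i} ∪
  {v | ∃ j k, j ≠ k ∧ v = stdBasis n j - stdBasis n k}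

/-- The lattice `ℤ^n ⊆ ℝ^n`. -/
def intLattice (n : ℕ) : Set (Fin n → ℝ) := {u | ∀ i, ∃ m : ℤ, u i = m}

/-- The diagonal splitting polytope `F = {u | -1 ≤ ⟨u,v⟩ ≤ 1 for all v ∈ Φ}`. -/
def splitPolytope (n : ℕ) (Φ : Set (Fin n → ℝ)) : Set (Fin n → ℝ) :=
  {u | ∀ v ∈ Φ, -1 ≤ innerProd u v ∧ innerProd u v ≤ 1}

lemma innerProd_stdBasis {n : ℕ} (u : Fin n → ℝ) (i : Fin n) :
    innerProd u (stdBasis n i) = u i := by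
  simp [innerProd, stdBasis, mul_ite]

lemma innerProd_neg {n : ℕ} (u v : Fin n → ℝ) : innerProd u (-v) = -innerProd u v := by
  simp [innerProd, mul_neg]

lemma innerProd_sub {n : ℕ} (u v v' : Fin n → ℝ) :
    innerProd u (v - v') = innerProd u v - innerProd u v' := by
  simp [innerProd, mul_sub, Finset.sum_sub_distrib]

/-- Every lattice polytope cut out by `A_n` is diagonally split for every `q ≥ 2`:
the interior of the diagonal splitting polytope of `A_n` contains a representative of
every equivalence class in `(1/q)ℤ^n / ℤ^n`. -/
theorem typeA_diagonally_split (n : ℕ) (hn : 1 ≤ n) (q : ℤ) (hq : 2 ≤ q)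
    (w : Fin n → ℝ) (hw : (q : ℝ) • w ∈ intLattice n) :
    ∃ u : Fin n → ℝ, (q : ℝ) • u ∈ intLattice n ∧ u - w ∈ intLattice n ∧
      u ∈ interior (splitPolytope n (typeA n)) := by
  have hq0 : (0 : ℤ) < q := by omega
  have hqR : (0 : ℝ) < (q : ℝ) := by exact_mod_cast hq0
  -- choose integer coordinates of q • w
  have hm : ∀ i, ∃ m : ℤ, (q : ℝ) * w i = m := by
    intro i
    simpa using hw i
  choose m hmw using hm
  set a : Fin n → ℤ := fun i => m i % q with ha
  have ha0 : ∀ i, 0 ≤ a i := fun i => Int.emod_nonneg _ (by omega)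
  have haq : ∀ i, a i < q := fun i => Int.emod_lt_of_pos _ hq0
  refine ⟨fun i => (a i : ℝ) / q, ?_, ?_, ?_⟩
  · intro i
    refine ⟨a i, ?_⟩
    simp only [Pi.smul_apply, smul_eq_mul]
    field_simp
  · intro i
    refine ⟨-(m i / q), ?_⟩
    have hdiv : (q : ℤ) * (m i / q) + a i = m i := Int.mul_ediv_add_emod _ _
    have h1 : (a i : ℝ) = (m i : ℝ) - (q : ℝ) * ((m i / q : ℤ) : ℝ) := by
      exact_mod_cast (by linarith : (a i : ℤ) = m i - q * (m i / q))
    show (a i : ℝ) / q - w i = ((-(m i / q) : ℤ) : ℝ)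
    rw [h1, ← hmw i]
    push_cast
    field_simp
    ring
  · -- u is in the open set of strict inequalities, which is contained in the polytope
    set S : Set (Fin n → ℝ) :=
      {x | (∀ i, x i ∈ Set.Ioo (-1 : ℝ) 1) ∧ ∀ j k, x j - x k ∈ Set.Ioo (-1 : ℝ) 1} with hS
    have hopen : IsOpen S := by
      have : S = (⋂ i, (fun x : Fin n → ℝ => x i) ⁻¹' Set.Ioo (-1 : ℝ) 1) ∩
          ⋂ j, ⋂ k, (fun x : Fin n → ℝ => x j - x k) ⁻¹' Set.Ioo (-1 : ℝ) 1 := by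
        ext x
        simp [hS, Set.mem_iInter]
      rw [this]
      refine IsOpen.inter ?_ ?_
      · exact isOpen_iInter_of_finite fun i => isOpen_Ioo.preimage (continuous_apply i)
      · exact isOpen_iInter_of_finite fun j => isOpen_iInter_of_finite fun k =>
          isOpen_Ioo.preimage ((continuous_apply j).sub (continuous_apply k))
    have hsub : S ⊆ splitPolytope n (typeA n) := by
      rintro x ⟨hx1, hx2⟩ v hv
      rcases hv with ⟨i, hi | hi⟩ | ⟨j, k, hjk, hjkv⟩
      · subst hi
        rw [innerProd_stdBasis]
        exact ⟨(hx1 i).1.le, (hx1 i).2.le⟩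
      · subst hi
        rw [innerProd_neg, innerProd_stdBasis]
        constructor <;> nlinarith [(hx1 i).1, (hx1 i).2]
      · subst hjkv
        rw [innerProd_sub, innerProd_stdBasis, innerProd_stdBasis]
        exact ⟨(hx2 j k).1.le, (hx2 j k).2.le⟩
    refine interior_maximal hsub hopen ?_
    have key : ∀ i, (0 : ℝ) ≤ (a i : ℝ) / q ∧ (a i : ℝ) / q < 1 := by
      intro i
      constructor
      · exact div_nonneg (by exact_mod_cast ha0 i) hqR.le
      · rw [div_lt_one hqR]
        exact_mod_cast haq i
    constructor
    · intro i
      exact ⟨by linarith [(key i).1], (key i).2⟩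
    · intro j k
      exact ⟨by linarith [(key j).1, (key k).2], by linarith [(key j).2, (key k).1]⟩
end

section
/- Let n ≥ 1 and let Φ_C = {±2e_i : 1 ≤ i ≤ n} ∪ {±e_j ± e_k : 1 ≤ j < k ≤ n} (all four sign combinations) be the set of roots of type C_n in ℝ^n, whose root lattice is the even sublattice N = {a ∈ ℤ^n : a_1 + ⋯ + a_n is even} and whose dual lattice is M = ℤ^n + ℤ·(1/2, …, 1/2). Let F = {u ∈ ℝ^n : −1 ≤ ⟨u, v⟩ ≤ 1 for all v ∈ Φ_C}. Then for every odd integer q ≥ 3 and every w ∈ (1/q)M, there exists u ∈ (1/q)M with u − w ∈ M and u lying in the topological interior of F. (Consequently, every lattice polytope cut out by C_n is diagonally split for every odd q.) -/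
open Finset

/-- The roots of type `C_n`: `±2e_i` and `±e_j ± e_k` for `j < k` (all four sign choices). -/
noncomputable def typeC (n : ℕ) : Set (Fin n → ℝ) :=
  {v | ∃ i, v = (2 : ℝ) • stdBasis n i ∨ v = -((2 : ℝ) • stdBasis n i)} ∪
  {v | ∃ j k, j < k ∧ ∃ ε δ : ℝ, (ε = 1 ∨ ε = -1) ∧ (δ = 1 ∨ δ = -1) ∧
    v = ε • stdBasis n j + δ • stdBasis n k}

/-- The lattice `M = ℤ^n + ℤ·(1/2, …, 1/2) ⊆ ℝ^n`, the union of `ℤ^n` and its translate by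
`(1/2, …, 1/2)`. -/
def halfLattice (n : ℕ) : Set (Fin n → ℝ) :=
  {u | (∀ i, ∃ m : ℤ, u i = m) ∨ (∀ i, ∃ m : ℤ, u i = m + 1/2)}

lemma mem_interior_of_abs_lt_half {n : ℕ} (u : Fin n → ℝ) (hu : ∀ i, |u i| < 1/2) :
    u ∈ interior (splitPolytope n (typeC n)) := by
  have hopen : IsOpen {x : Fin n → ℝ | ∀ i, |x i| < 1/2} := by
    have : {x : Fin n → ℝ | ∀ i, |x i| < 1/2}
        = Set.pi Set.univ (fun _ => Set.Ioo (-(1/2)) (1/2)) := by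
      ext x; simp [abs_lt, Set.mem_pi]
    rw [this]; exact isOpen_set_pi Set.finite_univ (fun i _ => isOpen_Ioo)
  refine interior_maximal ?_ hopen hu
  intro x hx v hv
  rcases hv with ⟨i, h | h⟩ | ⟨j, k, hjk, ε, δ, hε, hδ, h⟩
  · have hval : innerProd x v = 2 * x i := by
      subst h; simp [innerProd, stdBasis, mul_ite, mul_comm]
    have := abs_lt.mp (hx i)
    constructor <;> rw [hval] <;> linarith [this.1, this.2]
  · have hval : innerProd x v = -(2 * x i) := by
      subst h; simp [innerProd, stdBasis, mul_ite, mul_comm]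
    have := abs_lt.mp (hx i)
    constructor <;> rw [hval] <;> linarith [this.1, this.2]
  · have hval : innerProd x v = ε * x j + δ * x k := by
      subst h; simp [innerProd, stdBasis, mul_ite, mul_add, Finset.sum_add_distrib, mul_comm]
    have h1 := abs_lt.mp (hx j)
    have h2 := abs_lt.mp (hx k)
    rcases hε with rfl | rfl <;> rcases hδ with rfl | rfl <;>
      constructor <;> rw [hval] <;>
      linarith [h1.1, h1.2, h2.1, h2.2]

/-- Every lattice polytope cut out by `C_n` is diagonally split for every odd `q ≥ 3`:
the interior of the diagonal splitting polytope of `C_n` contains a representative of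
every equivalence class in `(1/q)M / M`, where `M = ℤ^n + ℤ·(1/2,…,1/2)` is the dual of
the root lattice. -/
theorem typeC_diagonally_split (n : ℕ) (hn : 1 ≤ n) (q : ℤ) (hq : 3 ≤ q) (hodd : Odd q)
    (w : Fin n → ℝ) (hw : (q : ℝ) • w ∈ halfLattice n) :
    ∃ u : Fin n → ℝ, (q : ℝ) • u ∈ halfLattice n ∧ u - w ∈ halfLattice n ∧
      u ∈ interior (splitPolytope n (typeC n)) := by
  obtain ⟨kk, hkk⟩ := hodd
  have hq0 : (0:ℤ) < q := by linarith
  have hqR : (0:ℝ) < (q:ℝ) := by exact_mod_cast hq0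
  have hqR0 : (q:ℝ) ≠ 0 := ne_of_gt hqR
  set Q : ℕ := q.toNat with hQdef
  have hQq : (Q:ℤ) = q := Int.toNat_of_nonneg hq0.le
  have hQ0 : 0 < Q := by omega
  rcases hw with h | h
  · -- integer case
    simp only [Set.mem_setOf_eq, Pi.smul_apply, smul_eq_mul] at h
    choose m hm using h
    have hwval : ∀ i, w i = (m i : ℝ) / q := by
      intro i; field_simp [mul_comm]; rw [mul_comm]; exact hm i
    refine ⟨fun i => ((Int.bmod (m i) Q : ℤ) : ℝ) / q, ?_, ?_, ?_⟩
    · left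
      intro i
      refine ⟨Int.bmod (m i) Q, ?_⟩
      simp only [Pi.smul_apply, smul_eq_mul]
      field_simp
    · left
      intro i
      have hdvd : (q:ℤ) ∣ Int.bmod (m i) Q - m i := hQq ▸ Int.dvd_bmod_sub_self
      obtain ⟨d, hd⟩ := hdvd
      refine ⟨d, ?_⟩
      simp only [Pi.sub_apply]
      rw [hwval i]
      have : ((Int.bmod (m i) Q : ℤ) : ℝ) - (m i : ℝ) = (q:ℝ) * d := by
        exact_mod_cast congrArg (Int.cast : ℤ → ℝ) hd
      field_simp
      linarith [this]
    · apply mem_interior_of_abs_lt_half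
      intro i
      have h1 : Int.bmod (m i) Q ≤ ((Q:ℤ) - 1) / 2 := Int.bmod_le hQ0
      have h2 : -((Q:ℤ)/2) ≤ Int.bmod (m i) Q := Int.le_bmod hQ0
      rw [hQq] at h1 h2
      have hb : 2 * |Int.bmod (m i) Q| < q := by
        rcases abs_cases (Int.bmod (m i) Q) with ⟨he, _⟩ | ⟨he, _⟩ <;> omega
      rw [abs_div, abs_of_pos hqR, div_lt_iff₀ hqR, ← Int.cast_abs]
      have h3 : ((2 * |Int.bmod (m i) Q| : ℤ) : ℝ) < ((q : ℤ) : ℝ) := Int.cast_lt.mpr hb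
      rw [Int.cast_mul, Int.cast_two] at h3
      linarith
  · -- half-integer case
    simp only [Set.mem_setOf_eq, Pi.smul_apply, smul_eq_mul] at h
    choose m hm using h
    have hwval : ∀ i, w i = ((2 * m i + 1 : ℤ) : ℝ) / (2 * q) := by
      intro i
      have := hm i
      field_simp
      push_cast
      linarith [this]
    set s : Fin n → ℤ := fun i => Int.bmod (2 * m i + 1 + q) (2 * Q) with hsdef
    have hdvd : ∀ i, (2 * q : ℤ) ∣ s i - (2 * m i + 1 + q) := by
      intro i
      have := @Int.dvd_bmod_sub_self (2 * m i + 1 + q) (2 * Q)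
      have hc : ((2 * Q : ℕ) : ℤ) = 2 * q := by push_cast [hQq]; ring
      rwa [hc] at this
    refine ⟨fun i => ((s i : ℤ) : ℝ) / (2 * q), ?_, ?_, ?_⟩
    · left
      intro i
      obtain ⟨d, hd⟩ := hdvd i
      have hc : s i = 2 * (m i + kk + 1 + q * d) := by linear_combination hd + hkk
      set c : ℤ := m i + kk + 1 + q * d
      refine ⟨c, ?_⟩
      simp only [Pi.smul_apply, smul_eq_mul]
      rw [hc]
      push_cast
      field_simp
    · right
      intro i
      obtain ⟨d, hd⟩ := hdvd i
      refine ⟨d, ?_⟩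
      simp only [Pi.sub_apply]
      rw [hwval i]
      have hs : (s i : ℝ) = ((2 * m i + 1 : ℤ) : ℝ) + 2 * q * d + q := by
        push_cast
        have : (s i : ℝ) - (2 * (m i : ℝ) + 1 + q) = 2 * q * d := by exact_mod_cast congrArg (Int.cast : ℤ → ℝ) hd
        linarith
      rw [div_sub_div_same, hs]
      push_cast
      field_simp
      ring
    · apply mem_interior_of_abs_lt_half
      intro i
      obtain ⟨d, hd⟩ := hdvd i
      have h1 : s i ≤ ((2 * Q : ℕ) - 1 : ℤ) / 2 := Int.bmod_le (by omega)
      have h2 : -(((2 * Q : ℕ) : ℤ) / 2) ≤ s i := Int.le_bmod (by omega)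
      have hc : ((2 * Q : ℕ) : ℤ) = 2 * q := by push_cast [hQq]; ring
      rw [hc] at h1 h2
      have heven : s i = 2 * (m i + kk + 1 + q * d) := by linear_combination hd + hkk
      have hb : |s i| < q := by
        rcases abs_cases (s i) with ⟨he, _⟩ | ⟨he, _⟩ <;> omega
      have hq2 : (0:ℝ) < 2 * (q:ℝ) := by linarith
      rw [abs_div, abs_of_pos hq2, div_lt_iff₀ hq2]
      have h3 : |((s i : ℤ) : ℝ)| < (q:ℝ) := by
        rw [← Int.cast_abs]; exact_mod_cast hb
      linarith
end

section
/- Let n ≥ 1 and let Φ_C = {±2e_i : 1 ≤ i ≤ n} ∪ {±e_j ± e_k : 1 ≤ j < k ≤ n} (all four sign combinations) be the set of roots of type C_n in ℝ^n, with dual lattice M = ℤ^n + ℤ·(1/2, …, 1/2). Let P ⊆ ℝ^n be a lattice polytope cut out by Φ_C: that is, P is the convex hull of a nonempty finite subset of M, and there exist a finite subset S ⊆ Φ_C and real numbers c_v (v ∈ S) with P = {x ∈ ℝ^n : ⟨x, v⟩ ≥ c_v for all v ∈ S}. Then P is normal: for every positive integer m, every point of M lying in the dilate m·P is a sum of m points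 of M ∩ P. -/
open Finset Pointwise

namespace TypeCAux


/-- Odd rounding to the nearest integer (ties toward zero). -/
noncomputable def rnd (d : ℝ) : ℤ := if 0 ≤ d then ⌈d - 1/2⌉ else -⌈-d - 1/2⌉

lemma rnd_zero : rnd 0 = 0 := by
  simp only [rnd, le_refl, if_pos, zero_sub]
  norm_num

lemma rnd_neg (d : ℝ) : rnd (-d) = - rnd d := by
  rcases lt_trichotomy d 0 with h | rfl | h
  · have h1 : (0:ℝ) ≤ -d := by linarith
    have h2 : ¬ (0 ≤ d) := not_le.mpr h
    simp only [rnd, if_pos h1, if_neg h2, neg_neg]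
  · simp [rnd_zero]
  · have h1 : ¬ ((0:ℝ) ≤ -d) := by simpa using h
    have h2 : (0:ℝ) ≤ d := le_of_lt h
    simp only [rnd, if_neg h1, if_pos h2, neg_neg]

lemma rnd_le (d : ℝ) : (rnd d : ℝ) ≤ d + 1/2 := by
  unfold rnd
  split_ifs with h
  · have := Int.ceil_lt_add_one (d - 1/2)
    push_cast at this ⊢
    linarith
  · have := Int.le_ceil (-d - 1/2)
    push_cast at this ⊢
    linarith

lemma le_rnd (d : ℝ) : d - 1/2 ≤ (rnd d : ℝ) := by
  unfold rnd
  split_ifs with h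
  · have := Int.le_ceil (d - 1/2)
    push_cast at this ⊢
    linarith
  · have := Int.ceil_lt_add_one (-d - 1/2)
    push_cast at this ⊢
    linarith

lemma abs_rnd_sub (d : ℝ) : |(rnd d : ℝ) - d| ≤ 1/2 :=
  abs_le.mpr ⟨by linarith [le_rnd d], by linarith [rnd_le d]⟩

variable {n : ℕ}

lemma ip_add_left (a b v : Fin n → ℝ) :
    innerProd (a + b) v = innerProd a v + innerProd b v := by
  simp [innerProd, Pi.add_apply, add_mul, Finset.sum_add_distrib]

lemma ip_sub_left (a b v : Fin n → ℝ) :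
    innerProd (a - b) v = innerProd a v - innerProd b v := by
  simp [innerProd, Pi.sub_apply, sub_mul, Finset.sum_sub_distrib]

lemma ip_smul_left (r : ℝ) (a v : Fin n → ℝ) :
    innerProd (r • a) v = r * innerProd a v := by
  simp [innerProd, Pi.smul_apply, smul_eq_mul, Finset.mul_sum, mul_assoc]

lemma ip_smul_std (z : Fin n → ℝ) (a : ℝ) (i : Fin n) :
    innerProd z (a • stdBasis n i) = a * z i := by
  unfold innerProd stdBasis
  have h : ∀ t : Fin n, z t * (a • fun j => if j = i then (1:ℝ) else 0) t
      = if t = i then a * z t else 0 := by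
    intro t
    by_cases h : t = i <;> simp [h]
    ring
  rw [Finset.sum_congr rfl fun t _ => h t, Finset.sum_ite_eq' Finset.univ i]
  simp

lemma ip_neg_right (z v : Fin n → ℝ) : innerProd z (-v) = - innerProd z v := by
  simp [innerProd, mul_neg, ← Finset.sum_neg_distrib]

lemma ip_add_right (z u w : Fin n → ℝ) :
    innerProd z (u + w) = innerProd z u + innerProd z w := by
  simp [innerProd, Pi.add_apply, mul_add, Finset.sum_add_distrib]

lemma ip_sum_left {α : Type*} (s : Finset α) (f : α → (Fin n → ℝ)) (v : Fin n → ℝ) :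
    innerProd (∑ u ∈ s, f u) v = ∑ u ∈ s, innerProd (f u) v := by
  classical
  induction s using Finset.induction with
  | empty => simp [innerProd]
  | insert _ _ h ih => rw [Finset.sum_insert h, Finset.sum_insert h, ip_add_left, ih]


lemma ip_int_of_mem {u v : Fin n → ℝ} (hu : u ∈ halfLattice n) (hv : v ∈ typeC n) :
    ∃ z : ℤ, innerProd u v = (z : ℝ) := by
  rcases hv with ⟨i, hi | hi⟩ | ⟨j, k, -, ε, δ, hε, hδ, hv⟩
  · subst hi
    rcases hu with h | h <;> obtain ⟨a, ha⟩ := h i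
    · exact ⟨2 * a, by rw [ip_smul_std, ha]; push_cast; ring⟩
    · exact ⟨2 * a + 1, by rw [ip_smul_std, ha]; push_cast; ring⟩
  · subst hi
    rcases hu with h | h <;> obtain ⟨a, ha⟩ := h i
    · exact ⟨-(2 * a), by rw [ip_neg_right, ip_smul_std, ha]; push_cast; ring⟩
    · exact ⟨-(2 * a + 1), by rw [ip_neg_right, ip_smul_std, ha]; push_cast; ring⟩
  · subst hv
    rw [ip_add_right, ip_smul_std, ip_smul_std]
    rcases hu with h | h
    · obtain ⟨a, ha⟩ := h j; obtain ⟨b, hb⟩ := h k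
      rcases hε with rfl | rfl <;> rcases hδ with rfl | rfl
      · exact ⟨a + b, by rw [ha, hb]; push_cast; ring⟩
      · exact ⟨a - b, by rw [ha, hb]; push_cast; ring⟩
      · exact ⟨b - a, by rw [ha, hb]; push_cast; ring⟩
      · exact ⟨-(a + b), by rw [ha, hb]; push_cast; ring⟩
    · obtain ⟨a, ha⟩ := h j; obtain ⟨b, hb⟩ := h k
      rcases hε with rfl | rfl <;> rcases hδ with rfl | rfl
      · exact ⟨a + b + 1, by rw [ha, hb]; push_cast; ring⟩
      · exact ⟨a - b, by rw [ha, hb]; push_cast; ring⟩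
      · exact ⟨b - a, by rw [ha, hb]; push_cast; ring⟩
      · exact ⟨-(a + b + 1), by rw [ha, hb]; push_cast; ring⟩

lemma abs_ip_le {e v : Fin n → ℝ} (he : ∀ i, |e i| ≤ 1/2) (hv : v ∈ typeC n) :
    |innerProd e v| ≤ 1 := by
  rcases hv with ⟨i, hi | hi⟩ | ⟨j, k, -, ε, δ, hε, hδ, hv⟩
  · subst hi
    rw [ip_smul_std]
    have := abs_le.mp (he i)
    rw [abs_le]; constructor <;> linarith [this.1, this.2]
  · subst hi
    rw [ip_neg_right, ip_smul_std]
    have := abs_le.mp (he i)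
    rw [abs_le]; constructor <;> linarith [this.1, this.2]
  · subst hv
    rw [ip_add_right, ip_smul_std, ip_smul_std]
    have h1 := abs_le.mp (he j)
    have h2 := abs_le.mp (he k)
    rcases hε with rfl | rfl <;> rcases hδ with rfl | rfl <;>
      (rw [abs_le]; constructor <;> nlinarith [h1.1, h1.2, h2.1, h2.2])

lemma ip_rnd_eq_zero {d v : Fin n → ℝ} (hv : v ∈ typeC n)
    (hd : innerProd d v = 0) : innerProd (fun i => (rnd (d i) : ℝ)) v = 0 := by
  rcases hv with ⟨i, hi | hi⟩ | ⟨j, k, -, ε, δ, hε, hδ, hv⟩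
  · subst hi
    rw [ip_smul_std] at hd ⊢
    have : d i = 0 := by linarith
    simp only [this, rnd_zero]
    norm_num
  · subst hi
    rw [ip_neg_right, ip_smul_std] at hd ⊢
    have : d i = 0 := by linarith
    simp only [this, rnd_zero]
    norm_num
  · subst hv
    rw [ip_add_right, ip_smul_std, ip_smul_std] at hd ⊢
    show ε * ((rnd (d j) : ℤ) : ℝ) + δ * ((rnd (d k) : ℤ) : ℝ) = 0
    rcases hε with rfl | rfl <;> rcases hδ with rfl | rfl
    · have : d k = -(d j) := by linarith
      rw [this, rnd_neg]; push_cast; ring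
    · have : d k = d j := by linarith
      rw [this]; ring
    · have : d k = d j := by linarith
      rw [this]; ring
    · have : d k = -(d j) := by linarith
      rw [this, rnd_neg]; push_cast; ring

lemma halfLattice_sub {u w : Fin n → ℝ} (hu : u ∈ halfLattice n) (hw : w ∈ halfLattice n) :
    u - w ∈ halfLattice n := by
  rcases hu with h1 | h1 <;> rcases hw with h2 | h2
  · left; intro i
    obtain ⟨a, ha⟩ := h1 i; obtain ⟨b, hb⟩ := h2 i
    exact ⟨a - b, by simp [Pi.sub_apply, ha, hb]⟩
  · right; intro i
    obtain ⟨a, ha⟩ := h1 i; obtain ⟨b, hb⟩ := h2 i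
    exact ⟨a - b - 1, by simp only [Pi.sub_apply, ha, hb]; push_cast; ring⟩
  · right; intro i
    obtain ⟨a, ha⟩ := h1 i; obtain ⟨b, hb⟩ := h2 i
    exact ⟨a - b, by simp only [Pi.sub_apply, ha, hb]; push_cast; ring⟩
  · left; intro i
    obtain ⟨a, ha⟩ := h1 i; obtain ⟨b, hb⟩ := h2 i
    exact ⟨a - b, by simp only [Pi.sub_apply, ha, hb]; push_cast; ring⟩

lemma halfLattice_add_int {u : Fin n → ℝ} (hu : u ∈ halfLattice n) (g : Fin n → ℤ) :
    (u + fun i => (g i : ℝ)) ∈ halfLattice n := by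
  rcases hu with h | h
  · left; intro i
    obtain ⟨a, ha⟩ := h i
    exact ⟨a + g i, by simp [Pi.add_apply, ha]⟩
  · right; intro i
    obtain ⟨a, ha⟩ := h i
    exact ⟨a + g i, by simp only [Pi.add_apply, ha]; push_cast; ring⟩

lemma convex_cutSet (S : Finset (Fin n → ℝ)) (c : (Fin n → ℝ) → ℝ) :
    Convex ℝ {x : Fin n → ℝ | ∀ v ∈ S, c v ≤ innerProd x v} := by
  intro x hx y hy a b ha hb hab
  intro v hv
  have h : innerProd (a • x + b • y) v = a * innerProd x v + b * innerProd y v := by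
    rw [ip_add_left, ip_smul_left, ip_smul_left]
  rw [Set.mem_setOf_eq] at hx hy
  have h1 := mul_le_mul_of_nonneg_left (hx v hv) ha
  have h2 := mul_le_mul_of_nonneg_left (hy v hv) hb
  have h3 : a * c v + b * c v = c v := by rw [← add_mul, hab, one_mul]
  linarith [h, h1, h2, h3]

end TypeCAux

/-- Every lattice polytope (with respect to the dual lattice `M = ℤ^n + ℤ·(1/2,…,1/2)` of
the root lattice) cut out by the root system `C_n` is normal: every lattice point of `m·P`
is a sum of `m` lattice points of `P`. -/
theorem typeC_polytope_normal (n : ℕ) (hn : 1 ≤ n) (P : Set (Fin n → ℝ))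
    (hpoly : ∃ V : Set (Fin n → ℝ), V.Finite ∧ V.Nonempty ∧ V ⊆ halfLattice n ∧
      P = convexHull ℝ V)
    (hcut : ∃ S : Finset (Fin n → ℝ), ↑S ⊆ typeC n ∧ ∃ c : (Fin n → ℝ) → ℝ,
      P = {x | ∀ v ∈ S, c v ≤ innerProd x v})
    (m : ℕ) (hm : 0 < m) (x : Fin n → ℝ) (hx : x ∈ halfLattice n) (hxm : x ∈ (m : ℝ) • P) :
    ∃ f : Fin m → (Fin n → ℝ), (∀ j, f j ∈ halfLattice n ∧ f j ∈ P) ∧ x = ∑ j, f j := by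
  classical
  obtain ⟨V, hVfin, hVne, hVM, hPV⟩ := hpoly
  obtain ⟨S, hS, c, hPc⟩ := hcut
  have hScond : ∀ v ∈ S, v ∈ typeC n := fun v hv => hS hv
  set c' : (Fin n → ℝ) → ℤ := fun v => ⌈c v⌉ with hc'def
  have hPdef : P = {x : Fin n → ℝ | ∀ v ∈ S, (c' v : ℝ) ≤ innerProd x v} := by
    apply Set.Subset.antisymm
    · rw [hPV]
      apply convexHull_min _ (TypeCAux.convex_cutSet S (fun v => (c' v : ℝ)))
      intro u huV v hvS
      have huP : u ∈ P := by rw [hPV]; exact subset_convexHull ℝ V huV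
      have hu1 : c v ≤ innerProd u v := by rw [hPc] at huP; exact huP v hvS
      obtain ⟨z, hz⟩ := TypeCAux.ip_int_of_mem (hVM huV) (hScond v hvS)
      rw [hz] at hu1 ⊢
      have h2 : c' v ≤ z := Int.ceil_le.mpr (by exact_mod_cast hu1)
      exact_mod_cast h2
    · intro x' hx'
      rw [hPc]
      intro v hv
      exact le_trans (Int.le_ceil (c v)) (hx' v hv)
  have hm0 : ∀ u ∈ V, u ∈ P := fun u hu => by rw [hPV]; exact subset_convexHull ℝ V hu
  set V₀ : Finset (Fin n → ℝ) := hVfin.toFinset with hV₀def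
  have hV₀coe : (V₀ : Set (Fin n → ℝ)) = V := hVfin.coe_toFinset
  have main : ∀ (k : ℕ), 1 ≤ k → ∀ x : Fin n → ℝ, x ∈ halfLattice n → x ∈ (k : ℝ) • P →
      ∃ f : Fin k → (Fin n → ℝ), (∀ j, f j ∈ halfLattice n ∧ f j ∈ P) ∧ x = ∑ j, f j := by
    intro k hk
    induction k, hk using Nat.le_induction with
    | base =>
      intro x hx hxm
      rw [Nat.cast_one, one_smul] at hxm
      exact ⟨fun _ => x, fun j => ⟨hx, hxm⟩, by simp⟩
    | succ k hk ih =>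
      intro x hx hxm
      obtain ⟨q, hqP, hqx⟩ := hxm
      have hkpos : 0 < k := hk
      have hk0 : (0:ℝ) < k := by exact_mod_cast hkpos
      push_cast at hqx
      have hq_ge : ∀ v ∈ S, (c' v : ℝ) ≤ innerProd q v := by
        rw [hPdef] at hqP; exact hqP
      have hxv : ∀ v : Fin n → ℝ, innerProd x v = ((k:ℝ) + 1) * innerProd q v := by
        intro v; rw [← hqx, TypeCAux.ip_smul_left]
      have hq' : q ∈ convexHull ℝ (V₀ : Set (Fin n → ℝ)) := by
        rw [hV₀coe, ← hPV]; exact hqP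
      rw [Finset.convexHull_eq, Set.mem_setOf_eq] at hq'
      obtain ⟨w, hw0, hw1, hwc⟩ := hq'
      rw [Finset.centerMass_eq_of_sum_1 _ id hw1] at hwc
      simp only [id_eq] at hwc
      obtain ⟨u₀, hu₀V₀, hu₀w⟩ : ∃ u ∈ V₀, 0 < w u := by
        by_contra hcon
        push_neg at hcon
        have hzero : ∑ u ∈ V₀, w u = 0 :=
          Finset.sum_eq_zero fun u hu => le_antisymm (hcon u hu) (hw0 u hu)
        rw [hw1] at hzero; norm_num at hzero
      have hu₀V : u₀ ∈ V := by rw [← hV₀coe]; exact hu₀V₀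
      have hu₀M : u₀ ∈ halfLattice n := hVM hu₀V
      have hVP : ∀ u ∈ V₀, ∀ v ∈ S, (c' v : ℝ) ≤ innerProd u v := by
        intro u hu v hv
        have h := hm0 u (by rw [← hV₀coe]; exact hu)
        rw [hPdef] at h; exact h v hv
      have hu₀T : ∀ v ∈ S, innerProd q v = (c' v : ℝ) → innerProd u₀ v = (c' v : ℝ) := by
        intro v hvS hvT
        have hqv : innerProd q v = ∑ u ∈ V₀, w u * innerProd u v := by
          rw [← hwc, TypeCAux.ip_sum_left]
          exact Finset.sum_congr rfl fun u _ => TypeCAux.ip_smul_left (w u) u v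
        have hsum : ∑ u ∈ V₀, w u * (innerProd u v - (c' v : ℝ)) = 0 := by
          have hexp : ∑ u ∈ V₀, w u * (innerProd u v - (c' v : ℝ))
              = (∑ u ∈ V₀, w u * innerProd u v) - (∑ u ∈ V₀, w u) * (c' v : ℝ) := by
            rw [Finset.sum_mul, ← Finset.sum_sub_distrib]
            exact Finset.sum_congr rfl fun u _ => by ring
          rw [hexp, hw1, ← hqv, hvT]; ring
        have hz := (Finset.sum_eq_zero_iff_of_nonneg fun u hu =>
          mul_nonneg (hw0 u hu) (by linarith [hVP u hu v hvS])).mp hsum u₀ hu₀V₀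
        rcases mul_eq_zero.mp hz with h | h
        · exact absurd h (ne_of_gt hu₀w)
        · linarith [h]
      set d : Fin n → ℝ := q - u₀ with hd_def
      set rr : Fin n → ℝ := fun i => ((TypeCAux.rnd (d i) : ℤ) : ℝ) with hrr_def
      set y : Fin n → ℝ := u₀ + rr with hy_def
      have hyM : y ∈ halfLattice n :=
        TypeCAux.halfLattice_add_int hu₀M fun i => TypeCAux.rnd (d i)
      have herr : ∀ i, |y i - q i| ≤ 1/2 := by
        intro i
        have h1 : y i - q i = ((TypeCAux.rnd (d i) : ℤ) : ℝ) - d i := by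
          simp only [hy_def, hrr_def, hd_def, Pi.add_apply, Pi.sub_apply]
          ring
        rw [h1]; exact TypeCAux.abs_rnd_sub (d i)
      have hkey : ∀ v ∈ S, (c' v : ℝ) ≤ innerProd y v ∧
          (k : ℝ) * (c' v : ℝ) ≤ innerProd (x - y) v := by
        intro v hv
        have hvC := hScond v hv
        have hxy_sub : innerProd (x - y) v = innerProd x v - innerProd y v :=
          TypeCAux.ip_sub_left x y v
        by_cases ht : innerProd q v = (c' v : ℝ)
        · have hu0 := hu₀T v hv ht
          have hdv : innerProd d v = 0 := by
            rw [hd_def, TypeCAux.ip_sub_left, ht, hu0]; ring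
          have hyv : innerProd y v = (c' v : ℝ) := by
            rw [hy_def, TypeCAux.ip_add_left, hu0, hrr_def,
              TypeCAux.ip_rnd_eq_zero hvC hdv, add_zero]
          refine ⟨le_of_eq hyv.symm, ?_⟩
          rw [hxy_sub, hyv, hxv v, ht]
          nlinarith [hk0]
        · have hqgt : (c' v : ℝ) < innerProd q v := lt_of_le_of_ne (hq_ge v hv) (Ne.symm ht)
          have hEv : |innerProd (y - q) v| ≤ 1 := by
            apply TypeCAux.abs_ip_le _ hvC
            intro i
            simpa using herr i
          have hEv' := abs_le.mp hEv
          have hyq : innerProd y v = innerProd q v + innerProd (y - q) v := by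
            rw [TypeCAux.ip_sub_left]; ring
          obtain ⟨zy, hzy⟩ := TypeCAux.ip_int_of_mem hyM hvC
          obtain ⟨zxy, hzxy⟩ := TypeCAux.ip_int_of_mem (TypeCAux.halfLattice_sub hx hyM) hvC
          constructor
          · have h1 : (c' v : ℝ) - 1 < (zy : ℝ) := by
              rw [← hzy, hyq]; linarith [hEv'.1]
            have h2 : c' v - 1 < zy := by exact_mod_cast h1
            rw [hzy]
            exact_mod_cast (by omega : c' v ≤ zy)
          · have h1 : (k : ℝ) * (c' v : ℝ) - 1 < (zxy : ℝ) := by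
              rw [← hzxy, hxy_sub, hyq, hxv v]
              have hkq : (k : ℝ) * (c' v : ℝ) < (k : ℝ) * innerProd q v :=
                mul_lt_mul_of_pos_left hqgt hk0
              linarith [hEv'.2]
            have h2 : (k : ℤ) * c' v - 1 < zxy := by exact_mod_cast h1
            rw [hzxy]
            exact_mod_cast (by omega : (k : ℤ) * c' v ≤ zxy)
      have hyP : y ∈ P := by
        rw [hPdef]; intro v hv; exact (hkey v hv).1
      have hxyP : x - y ∈ (k : ℝ) • P := by
        refine ⟨(k : ℝ)⁻¹ • (x - y), ?_, ?_⟩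
        · rw [hPdef]; intro v hv
          rw [TypeCAux.ip_smul_left, inv_mul_eq_div, le_div_iff₀ hk0]
          have := (hkey v hv).2
          linarith
        · show (k : ℝ) • ((k : ℝ)⁻¹ • (x - y)) = x - y
          rw [smul_smul, mul_inv_cancel₀ (ne_of_gt hk0), one_smul]
      obtain ⟨g, hg, hgsum⟩ := ih (x - y) (TypeCAux.halfLattice_sub hx hyM) hxyP
      refine ⟨Fin.cons y g, ?_, ?_⟩
      · intro j
        induction j using Fin.cases with
        | zero => simpa using ⟨hyM, hyP⟩
        | succ j' => simpa using hg j'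
      · rw [Fin.sum_cons, ← hgsum]
        abel
  exact main m hm x hx hxm
end
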